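/- arXiv:1910.09035 — 3 statements merged into one kernel-verified Lean document; each statement's English description precedes it below -/
import Mathlib

section
/- Let μ be a centered probability measure on ℝ^d satisfying an exponential concentration inequality with constant α > 0, and let T be a Brenier map sending the standard Gaussian measure γ onto μ. Then |T(x)| ≤ max(12/α, 8) · (|x|² + 17d) for every x ∈ ℝ^d. -/
open MeasureTheory Real
open scoped RealInnerProductSpace ENNReal

noncomputable section

/-- The standard Gaussian measure `γ` on `ℝ^d`, with density
`(2π)^{-d/2} e^{-|x|²/2}` with respect to Lebesgue measure. -/
def stdGaussian (d : ℕ) : Measure (EuclideanSpace ℝ (Fin d)) :=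
  volume.withDensity fun x =>
    ENNReal.ofReal ((2 * π) ^ (-(d : ℝ) / 2) * Real.exp (-‖x‖ ^ 2 / 2))

/-- A probability measure on `ℝ^d` is centered if `∫ x dμ(x) = 0`. -/
def IsCentered {d : ℕ} (μ : Measure (EuclideanSpace ℝ (Fin d))) : Prop :=
  ∫ x, x ∂μ = 0

/-- A probability measure on `ℝ^d` is isotropic if `∫ xᵢ xⱼ dμ(x) = δᵢⱼ`. -/
def IsIsotropic {d : ℕ} (μ : Measure (EuclideanSpace ℝ (Fin d))) : Prop :=
  ∀ i j : Fin d, ∫ x, x i * x j ∂μ = if i = j then 1 else 0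

/-- A measure on `ℝ^d` is log-concave if `μ = e^{-V(x)} dx` for some convex `V`. -/
def IsLogConcave {d : ℕ} (μ : Measure (EuclideanSpace ℝ (Fin d))) : Prop :=
  ∃ V : EuclideanSpace ℝ (Fin d) → ℝ, ConvexOn ℝ Set.univ V ∧
    μ = volume.withDensity fun x => ENNReal.ofReal (Real.exp (-V x))

/-- `T = ∇φ` is a Brenier map sending the standard Gaussian onto `μ` if `φ` is convex,
differentiable, and the pushforward of `γ` under `∇φ` is `μ`. -/
def IsBrenierPotential {d : ℕ} (φ : EuclideanSpace ℝ (Fin d) → ℝ)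
    (μ : Measure (EuclideanSpace ℝ (Fin d))) : Prop :=
  ConvexOn ℝ Set.univ φ ∧ Differentiable ℝ φ ∧
    Measure.map (gradient φ) (stdGaussian d) = μ

/-- `μ` satisfies an exponential concentration inequality with constant `α`: for every
`1`-Lipschitz `f` and every `r ≥ 0`, `μ({f ≥ ∫ f dμ + r}) ≤ exp(-α r)`. -/
def ExponentialConcentration {d : ℕ} (μ : Measure (EuclideanSpace ℝ (Fin d))) (α : ℝ) : Prop :=
  ∀ f : EuclideanSpace ℝ (Fin d) → ℝ, LipschitzWith 1 f → ∀ r : ℝ, 0 ≤ r →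
    μ {x | (∫ y, f y ∂μ) + r ≤ f x} ≤ ENNReal.ofReal (Real.exp (-α * r))

open Set Filter

lemma coord_lipschitz {d : ℕ} (i : Fin d) :
    LipschitzWith 1 (fun z : EuclideanSpace ℝ (Fin d) => z i) := by
  apply LipschitzWith.of_dist_le_mul
  intro z w
  rw [NNReal.coe_one, one_mul, EuclideanSpace.dist_eq]
  have h1 : dist (z i) (w i) = Real.sqrt (dist (z i) (w i) ^ 2) :=
    (Real.sqrt_sq dist_nonneg).symm
  rw [h1]
  apply Real.sqrt_le_sqrt
  exact Finset.single_le_sum (f := fun j => dist (z j) (w j) ^ 2)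
    (fun j _ => sq_nonneg _) (Finset.mem_univ i)

lemma tail_bound {d : ℕ} (μ : Measure (EuclideanSpace ℝ (Fin d)))
    (α : ℝ) (hconc : ExponentialConcentration μ α) (i : Fin d) {t : ℝ} (ht : 0 ≤ t) :
    μ {z | t < |z i - ∫ y, y i ∂μ|} ≤ 2 * ENNReal.ofReal (Real.exp (-α * t)) := by
  set c := ∫ y, (y : EuclideanSpace ℝ (Fin d)) i ∂μ with hc
  have hsub : {z : EuclideanSpace ℝ (Fin d) | t < |z i - c|} ⊆
      {z | (∫ y, (y : EuclideanSpace ℝ (Fin d)) i ∂μ) + t ≤ z i} ∪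
      {z | (∫ y, -((y : EuclideanSpace ℝ (Fin d)) i) ∂μ) + t ≤ -(z i)} := by
    intro z hz
    simp only [Set.mem_setOf_eq, Set.mem_union] at hz ⊢
    rw [integral_neg, ← hc]
    rcases lt_abs.mp hz with h | h
    · left; linarith
    · right; linarith
  calc μ {z : EuclideanSpace ℝ (Fin d) | t < |z i - c|} ≤ _ := measure_mono hsub
    _ ≤ μ {z | (∫ y, (y : EuclideanSpace ℝ (Fin d)) i ∂μ) + t ≤ z i} +
        μ {z | (∫ y, -((y : EuclideanSpace ℝ (Fin d)) i) ∂μ) + t ≤ -(z i)} :=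
      measure_union_le _ _
    _ ≤ ENNReal.ofReal (Real.exp (-α * t)) + ENNReal.ofReal (Real.exp (-α * t)) := by
      gcongr
      · exact hconc _ (coord_lipschitz i) t ht
      · exact hconc _ ((coord_lipschitz i).neg) t ht
    _ = 2 * ENNReal.ofReal (Real.exp (-α * t)) := (two_mul _).symm


lemma grad_mono {d : ℕ} {φ : EuclideanSpace ℝ (Fin d) → ℝ}
    (hc : ConvexOn ℝ Set.univ φ) (hd : Differentiable ℝ φ)
    (x y : EuclideanSpace ℝ (Fin d)) :
    ⟪gradient φ x, y - x⟫ ≤ ⟪gradient φ y, y - x⟫ := by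
  set v := y - x with hv
  have key : ∀ t : ℝ, HasDerivAt (fun t : ℝ => φ (x + t • v))
      ⟪gradient φ (x + t • v), v⟫ t := by
    intro t
    have h1 : HasFDerivAt φ ((InnerProductSpace.toDual ℝ _) (gradient φ (x + t • v)))
        (x + t • v) := ((hd _).hasGradientAt).hasFDerivAt
    have h2 : HasDerivAt (fun t : ℝ => x + t • v) v t := by
      simpa using ((hasDerivAt_id t).smul_const v).const_add x
    have := h1.comp_hasDerivAt t h2
    simpa [Function.comp_def] using this
  have gcon : ConvexOn ℝ Set.univ fun t : ℝ => φ (x + t • v) := by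
    have := hc.comp_affineMap (AffineMap.lineMap x y)
    have heq : (fun t : ℝ => φ (x + t • v)) = φ ∘ (AffineMap.lineMap x y) := by
      funext t
      simp [AffineMap.lineMap_apply, hv, add_comm]
    rw [heq]
    simpa using this
  have hmono := gcon.monotoneOn_deriv (fun t _ => (key t).differentiableAt)
  have h0 := (key 0).deriv
  have h1 := (key 1).deriv
  have := hmono (Set.mem_univ (0:ℝ)) (Set.mem_univ (1:ℝ)) zero_le_one
  rw [h0, h1] at this
  simpa [hv] using this





lemma coord_integrable {d : ℕ} (μ : Measure (EuclideanSpace ℝ (Fin d)))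
    [IsProbabilityMeasure μ] (α : ℝ) (hα : 0 < α)
    (hconc : ExponentialConcentration μ α) (i : Fin d) :
    Integrable (fun z : EuclideanSpace ℝ (Fin d) => z i) μ := by
  set c := ∫ y, (y : EuclideanSpace ℝ (Fin d)) i ∂μ with hc
  have hcont : Continuous (fun z : EuclideanSpace ℝ (Fin d) => z i) :=
    (coord_lipschitz i).continuous
  have hg_cont : Continuous (fun z : EuclideanSpace ℝ (Fin d) => |z i - c|) :=
    (hcont.sub continuous_const).abs
  have hexp : IntegrableOn (fun t => 2 * Real.exp (-α * t)) (Ioi (0:ℝ)) :=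
    (exp_neg_integrableOn_Ioi 0 hα).const_mul 2
  have key : ∫⁻ z, ENNReal.ofReal |z i - c| ∂μ < ⊤ := by
    rw [lintegral_eq_lintegral_meas_lt μ (ae_of_all _ fun z => abs_nonneg _)
      hg_cont.aemeasurable]
    have step : ∫⁻ t in Ioi (0:ℝ), μ {z | t < |z i - c|} ≤
        ∫⁻ t in Ioi (0:ℝ), ENNReal.ofReal (2 * Real.exp (-α * t)) := by
      apply setLIntegral_mono (ENNReal.measurable_ofReal.comp (((measurable_id.const_mul (-α)).exp.const_mul 2) : Measurable fun t : ℝ => 2 * Real.exp (-α * t)))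
      intro t ht
      have h := tail_bound μ α hconc i (le_of_lt ht)
      simp only [Function.comp]
      rw [ENNReal.ofReal_mul (by norm_num : (0:ℝ) ≤ 2)]
      calc μ {z : EuclideanSpace ℝ (Fin d) | t < |z i - c|} ≤
          2 * ENNReal.ofReal (Real.exp (-α * t)) := h
        _ = ENNReal.ofReal 2 * ENNReal.ofReal (rexp (-α * t)) := by
            norm_num
    refine lt_of_le_of_lt step ?_
    have := hexp.hasFiniteIntegral
    rw [HasFiniteIntegral] at this
    refine lt_of_le_of_lt (lintegral_mono fun t => ?_) this
    rw [← ofReal_norm, Real.norm_eq_abs]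
    exact ENNReal.ofReal_le_ofReal (le_abs_self _)
  have habs : Integrable (fun z : EuclideanSpace ℝ (Fin d) => |z i - c|) μ :=
    ⟨hg_cont.aestronglyMeasurable,
      (hasFiniteIntegral_iff_ofReal (ae_of_all _ fun z => abs_nonneg _)).2 key⟩
  have hsub : Integrable (fun z : EuclideanSpace ℝ (Fin d) => z i - c) μ :=
    habs.mono' (hcont.sub continuous_const).aestronglyMeasurable
      (ae_of_all _ fun z => by simp [Real.norm_eq_abs])
  have h2 := hsub.add (integrable_const c)
  exact h2.congr (ae_of_all _ fun z => by simp)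


lemma norm_le_sum_abs {d : ℕ} (z : EuclideanSpace ℝ (Fin d)) :
    ‖z‖ ≤ ∑ i, |z i| := by
  rw [EuclideanSpace.norm_eq]
  have h1 : ∑ i, ‖z i‖ ^ 2 ≤ (∑ i, ‖z i‖) ^ 2 :=
    Finset.sum_sq_le_sq_sum_of_nonneg (fun i _ => norm_nonneg _)
  calc √(∑ i, ‖z i‖ ^ 2) ≤ √((∑ i, ‖z i‖) ^ 2) := Real.sqrt_le_sqrt h1
    _ = ∑ i, ‖z i‖ := Real.sqrt_sq (Finset.sum_nonneg fun i _ => norm_nonneg _)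
    _ = ∑ i, |z i| := by simp [Real.norm_eq_abs]

lemma mean_norm_bound {d : ℕ} (μ : Measure (EuclideanSpace ℝ (Fin d)))
    [IsProbabilityMeasure μ] (hcent : IsCentered μ) (α : ℝ) (hα : 0 < α)
    (hconc : ExponentialConcentration μ α) :
    ∫ z, ‖z‖ ∂μ ≤ 2 * d / α := by
  have hInt : ∀ i, Integrable (fun z : EuclideanSpace ℝ (Fin d) => z i) μ :=
    coord_integrable μ α hα hconc
  have hIntSum : Integrable (fun z : EuclideanSpace ℝ (Fin d) => ∑ i, |z i|) μ := by
    apply integrable_finset_sum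
    intro i _
    exact (hInt i).abs
  have hIntNorm : Integrable (fun z : EuclideanSpace ℝ (Fin d) => ‖z‖) μ :=
    hIntSum.mono' continuous_norm.aestronglyMeasurable
      (ae_of_all _ fun z => by simpa using norm_le_sum_abs z)
  have hIntId : Integrable (fun z : EuclideanSpace ℝ (Fin d) => z) μ :=
    hIntSum.mono' measurable_id.aestronglyMeasurable
      (ae_of_all _ fun z => norm_le_sum_abs z)
  have hc0 : ∀ i, (∫ y, (y : EuclideanSpace ℝ (Fin d)) i ∂μ) = 0 := by
    intro i
    have := (EuclideanSpace.proj i : EuclideanSpace ℝ (Fin d) →L[ℝ] ℝ).integral_comp_comm hIntId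
    simp only [EuclideanSpace.proj, PiLp.proj_apply] at this
    rw [this, hcent]
    simp
  have hexp : IntegrableOn (fun t => 2 * Real.exp (-α * t)) (Ioi (0:ℝ)) :=
    (exp_neg_integrableOn_Ioi 0 hα).const_mul 2
  have hExpVal : ∫ t in Ioi (0:ℝ), 2 * Real.exp (-α * t) = 2 / α := by
    rw [MeasureTheory.integral_const_mul]
    have h := integral_comp_mul_left_Ioi (fun x => Real.exp (-x)) 0 hα
    simp only [mul_zero, neg_mul] at h ⊢
    rw [h, integral_exp_neg_Ioi]
    simp [Real.exp_zero, smul_eq_mul, div_eq_mul_inv]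
  have habs_bound : ∀ i : Fin d, ∫ z, |z i| ∂μ ≤ 2 / α := by
    intro i
    have hInt_abs : Integrable (fun z : EuclideanSpace ℝ (Fin d) => |z i|) μ := (hInt i).abs
    rw [hInt_abs.integral_eq_integral_meas_lt (ae_of_all _ fun z => abs_nonneg _)]
    have hmono : ∀ t ∈ Ioi (0:ℝ),
        (μ {z : EuclideanSpace ℝ (Fin d) | t < |z i|}).toReal ≤ 2 * Real.exp (-α * t) := by
      intro t ht
      have h := tail_bound μ α hconc i (le_of_lt ht)
      rw [hc0 i] at h
      simp only [sub_zero] at h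
      apply ENNReal.toReal_le_of_le_ofReal (by positivity)
      calc μ {z : EuclideanSpace ℝ (Fin d) | t < |z i|} ≤
          2 * ENNReal.ofReal (Real.exp (-α * t)) := h
        _ = ENNReal.ofReal (2 * Real.exp (-α * t)) := by
          rw [ENNReal.ofReal_mul (by norm_num : (0:ℝ) ≤ 2)]; norm_num
    calc ∫ t in Ioi (0:ℝ), (μ {z : EuclideanSpace ℝ (Fin d) | t < |z i|}).toReal
        ≤ ∫ t in Ioi (0:ℝ), 2 * Real.exp (-α * t) := by
          apply integral_mono_of_nonneg (ae_of_all _ fun t => ENNReal.toReal_nonneg) hexp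
          rw [Filter.EventuallyLE, ae_restrict_iff' measurableSet_Ioi]
          exact ae_of_all _ hmono
      _ = 2 / α := hExpVal
  calc ∫ z, ‖z‖ ∂μ ≤ ∫ z, ∑ i, |z i| ∂μ :=
        integral_mono hIntNorm hIntSum (fun z => norm_le_sum_abs z)
    _ = ∑ i, ∫ z, |z i| ∂μ := integral_finset_sum _ (fun i _ => (hInt i).abs)
    _ ≤ ∑ _i : Fin d, 2 / α := Finset.sum_le_sum (fun i _ => habs_bound i)
    _ = d * (2 / α) := by simp [mul_comm]
    _ = 2 * d / α := by ring



lemma cube_subset_ball {d : ℕ} (p : EuclideanSpace ℝ (Fin d)) :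
    {y : EuclideanSpace ℝ (Fin d) | ∀ i, y i ∈ Icc (p i - 1) (p i + 1)} ⊆
      Metric.closedBall p (Real.sqrt d) := by
  intro y hy
  simp only [Set.mem_setOf_eq] at hy
  rw [Metric.mem_closedBall, EuclideanSpace.dist_eq]
  have h1 : ∀ i, dist (y i) (p i) ^ 2 ≤ 1 := by
    intro i
    have := hy i
    rw [Real.dist_eq]
    have habs : |y i - p i| ≤ 1 := abs_le.2 ⟨by linarith [this.1], by linarith [this.2]⟩
    calc |y i - p i| ^ 2 ≤ 1 ^ 2 := by
          apply pow_le_pow_left₀ (abs_nonneg _) habs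
      _ = 1 := one_pow 2
  calc Real.sqrt (∑ i, dist (y i) (p i) ^ 2) ≤ Real.sqrt (∑ _i : Fin d, (1:ℝ)) :=
        Real.sqrt_le_sqrt (Finset.sum_le_sum fun i _ => h1 i)
    _ = Real.sqrt d := by simp

lemma cube_volume {d : ℕ} (p : EuclideanSpace ℝ (Fin d)) :
    ENNReal.ofReal (2 ^ d) ≤
      volume {y : EuclideanSpace ℝ (Fin d) | ∀ i, y i ∈ Icc (p i - 1) (p i + 1)} := by
  set S : Set (Fin d → ℝ) := Set.pi Set.univ fun i => Icc (p i - 1) (p i + 1) with hS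
  have hSm : MeasurableSet S := MeasurableSet.univ_pi fun i => measurableSet_Icc
  have hpre : (MeasurableEquiv.toLp 2 (Fin d → ℝ)).symm ⁻¹' S =
      {y : EuclideanSpace ℝ (Fin d) | ∀ i, y i ∈ Icc (p i - 1) (p i + 1)} := by
    ext y
    simp only [hS, Set.mem_preimage, Set.mem_pi, Set.mem_univ, forall_true_left,
      Set.mem_setOf_eq]
    rfl
  rw [← hpre, (EuclideanSpace.volume_preserving_symm_measurableEquiv_toLp (Fin d)).measure_preimage
    hSm.nullMeasurableSet]
  rw [hS, volume_pi_pi]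
  simp only [Real.volume_Icc]
  have : ∀ i : Fin d, ENNReal.ofReal (p i + 1 - (p i - 1)) = ENNReal.ofReal 2 := by
    intro i; norm_num
  rw [Finset.prod_congr rfl fun i _ => this i, Finset.prod_const]
  rw [ENNReal.ofReal_pow (by norm_num : (0:ℝ) ≤ 2)]
  simp

lemma gauss_ball_lb {d : ℕ} (p : EuclideanSpace ℝ (Fin d)) :
    ENNReal.ofReal ((2 * π) ^ (-(d : ℝ) / 2) *
        Real.exp (-(‖p‖ + Real.sqrt d) ^ 2 / 2) * 2 ^ d) ≤
      stdGaussian d (Metric.closedBall p (Real.sqrt d)) := by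
  set c : ℝ := (2 * π) ^ (-(d : ℝ) / 2) * Real.exp (-(‖p‖ + Real.sqrt d) ^ 2 / 2) with hcdef
  have hc_nonneg : 0 ≤ c := by positivity
  have hdens : ∀ y ∈ Metric.closedBall p (Real.sqrt d),
      ENNReal.ofReal c ≤ ENNReal.ofReal ((2 * π) ^ (-(d : ℝ) / 2) * Real.exp (-‖y‖ ^ 2 / 2)) := by
    intro y hy
    apply ENNReal.ofReal_le_ofReal
    apply mul_le_mul_of_nonneg_left _ (by positivity)
    apply Real.exp_le_exp.2
    have hny : ‖y‖ ≤ ‖p‖ + Real.sqrt d := by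
      have := Metric.mem_closedBall.1 hy
      calc ‖y‖ = ‖p + (y - p)‖ := by rw [add_sub_cancel]
        _ ≤ ‖p‖ + ‖y - p‖ := norm_add_le _ _
        _ ≤ ‖p‖ + Real.sqrt d := by
            rw [← dist_eq_norm]; linarith [this]
    have : ‖y‖ ^ 2 ≤ (‖p‖ + Real.sqrt d) ^ 2 := by
      apply pow_le_pow_left₀ (norm_nonneg _) hny
    linarith
  have hmeas : MeasurableSet (Metric.closedBall p (Real.sqrt d)) :=
    Metric.isClosed_closedBall.measurableSet
  rw [stdGaussian, withDensity_apply _ hmeas]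
  have step1 : ENNReal.ofReal c * volume (Metric.closedBall p (Real.sqrt d)) ≤
      ∫⁻ y in Metric.closedBall p (Real.sqrt d),
        ENNReal.ofReal ((2 * π) ^ (-(d : ℝ) / 2) * Real.exp (-‖y‖ ^ 2 / 2)) ∂volume := by
    rw [← setLIntegral_const]
    apply setLIntegral_mono
    · exact (ENNReal.measurable_ofReal.comp
        ((continuous_const.mul (Real.continuous_exp.comp ((continuous_norm.pow 2).neg.div_const 2))).measurable))
    · exact hdens
  refine le_trans ?_ step1
  rw [ENNReal.ofReal_mul hc_nonneg]
  refine mul_le_mul_of_nonneg_left ?_ (zero_le)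
  calc ENNReal.ofReal (2 ^ d) ≤
      volume {y : EuclideanSpace ℝ (Fin d) | ∀ i, y i ∈ Icc (p i - 1) (p i + 1)} :=
        cube_volume p
    _ ≤ volume (Metric.closedBall p (Real.sqrt d)) := measure_mono (cube_subset_ball p)


set_option maxHeartbeats 1600000 in
/-- If `μ` is a centered probability measure on `ℝ^d` satisfying exponential concentration
with constant `α > 0` and `T = ∇φ` is a Brenier map sending the standard Gaussian onto `μ`,
then `|T(x)| ≤ max(12/α, 8) (|x|² + 17 d)` for every `x`. -/
theorem statement_2 {d : ℕ} (μ : Measure (EuclideanSpace ℝ (Fin d)))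
    [IsProbabilityMeasure μ] (hcent : IsCentered μ) (α : ℝ) (hα : 0 < α)
    (hconc : ExponentialConcentration μ α)
    (φ : EuclideanSpace ℝ (Fin d) → ℝ) (hφ : IsBrenierPotential φ μ)
    (x : EuclideanSpace ℝ (Fin d)) :
    ‖gradient φ x‖ ≤ max (12 / α) 8 * (‖x‖ ^ 2 + 17 * d) := by
  obtain ⟨hcvx, hdiff, hmap⟩ := hφ
  have hRHSfac : (0:ℝ) ≤ ‖x‖ ^ 2 + 17 * d := by positivity
  have hmax : (12 / α) ≤ max (12 / α) 8 := le_max_left _ _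
  rcases Nat.eq_zero_or_pos d with rfl | hd1
  · have hz : gradient φ x = 0 := Subsingleton.elim _ _
    rw [hz, norm_zero]
    apply mul_nonneg (le_trans (by norm_num) (le_max_right (12/α) 8)) hRHSfac
  have hd1' : (1:ℝ) ≤ d := by exact_mod_cast hd1
  have hd0' : (0:ℝ) < d := by linarith
  have hsd : (0:ℝ) < Real.sqrt d := Real.sqrt_pos.2 hd0'
  have hsd2 : Real.sqrt d ^ 2 = (d:ℝ) := Real.sq_sqrt (le_of_lt hd0')
  set T := gradient φ with hT
  set R := ‖T x‖ with hR
  set m := ∫ z, ‖z‖ ∂μ with hm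
  have hm0 : 0 ≤ m := integral_nonneg fun z => norm_nonneg _
  have hmle : m ≤ 2 * d / α := mean_norm_bound μ hcent α hα hconc
  suffices hfin : R ≤ 3 / α * (‖x‖ ^ 2 + 12 * d) by
    refine hfin.trans ?_
    have h2 : 3 / α * (‖x‖ ^ 2 + 12 * d) ≤ 12 / α * (‖x‖ ^ 2 + 17 * d) := by
      rw [div_mul_eq_mul_div, div_mul_eq_mul_div, div_le_div_iff_of_pos_right hα]
      nlinarith [sq_nonneg ‖x‖]
    exact h2.trans (mul_le_mul_of_nonneg_right hmax hRHSfac)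
  by_cases hcase : R ≤ 3 * m
  · have hR6 : R ≤ 6 * d / α := by
      calc R ≤ 3 * m := hcase
        _ ≤ 3 * (2 * d / α) := by linarith
        _ = 6 * d / α := by ring
    refine hR6.trans ?_
    rw [div_mul_eq_mul_div, div_le_div_iff_of_pos_right hα]
    nlinarith [sq_nonneg ‖x‖]
  push_neg at hcase
  have hRpos : 0 < R := by nlinarith
  set r := R / 3 - m with hr_def
  have hr : 0 ≤ r := by rw [hr_def]; linarith
  set θ := R⁻¹ • T x with hθ_def
  have hθ : ‖θ‖ = 1 := by
    rw [hθ_def, norm_smul, norm_inv, Real.norm_eq_abs, abs_of_pos hRpos, ← hR,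
      inv_mul_cancel₀ (ne_of_gt hRpos)]
  set p := x + (2 * Real.sqrt d) • θ with hp_def
  have hpx : p - x = (2 * Real.sqrt d) • θ := by rw [hp_def]; abel
  -- key geometric bound
  have hkey : ∀ y ∈ Metric.closedBall p (Real.sqrt d), m + r ≤ ‖T y‖ := by
    intro y hy
    have hmono := grad_mono hcvx hdiff x y
    have hyp : ‖y - p‖ ≤ Real.sqrt d := by
      rw [← dist_eq_norm]; exact Metric.mem_closedBall.1 hy
    have hyx : ‖y - x‖ ≤ 3 * Real.sqrt d := by
      have : y - x = (y - p) + (p - x) := by abel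
      rw [this]
      calc ‖(y - p) + (p - x)‖ ≤ ‖y - p‖ + ‖p - x‖ := norm_add_le _ _
        _ ≤ Real.sqrt d + 2 * Real.sqrt d := by
            apply add_le_add hyp
            rw [hpx, norm_smul, Real.norm_eq_abs, abs_of_pos (by positivity), hθ, mul_one]
        _ = 3 * Real.sqrt d := by ring
    have hinner_px : ⟪T x, p - x⟫ = 2 * Real.sqrt d * R := by
      rw [hpx, real_inner_smul_right, hθ_def, real_inner_smul_right,
        real_inner_self_eq_norm_sq, ← hR]
      field_simp
    have hinner_yp : -(R * Real.sqrt d) ≤ ⟪T x, y - p⟫ := by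
      have h1 : |⟪T x, y - p⟫| ≤ ‖T x‖ * ‖y - p‖ := abs_real_inner_le_norm _ _
      have h2 : ‖T x‖ * ‖y - p‖ ≤ R * Real.sqrt d :=
        mul_le_mul_of_nonneg_left hyp (norm_nonneg _)
      nlinarith [neg_abs_le ⟪T x, y - p⟫]
    have hlow : Real.sqrt d * R ≤ ⟪T x, y - x⟫ := by
      have hsplit : ⟪T x, y - x⟫ = ⟪T x, y - p⟫ + ⟪T x, p - x⟫ := by
        rw [← inner_add_right]
        congr 1
        abel
      rw [hsplit, hinner_px]
      nlinarith
    have hup : ⟪T y, y - x⟫ ≤ ‖T y‖ * (3 * Real.sqrt d) := by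
      calc ⟪T y, y - x⟫ ≤ ‖T y‖ * ‖y - x‖ := real_inner_le_norm _ _
        _ ≤ ‖T y‖ * (3 * Real.sqrt d) :=
            mul_le_mul_of_nonneg_left hyx (norm_nonneg _)
    have hR3 : R ≤ 3 * ‖T y‖ := by nlinarith
    have : m + r = R / 3 := by rw [hr_def]; ring
    rw [this]; linarith
  set S : Set (EuclideanSpace ℝ (Fin d)) := {z | m + r ≤ ‖z‖} with hS_def
  have hsubset : Metric.closedBall p (Real.sqrt d) ⊆ T ⁻¹' S := fun y hy => hkey y hy
  have haem : AEMeasurable T (stdGaussian d) := by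
    by_contra h
    rw [Measure.map_of_not_aemeasurable h] at hmap
    have h1 : μ Set.univ = 1 := measure_univ
    rw [← hmap] at h1
    simp at h1
  have hchain : stdGaussian d (Metric.closedBall p (Real.sqrt d)) ≤ μ S := by
    calc stdGaussian d (Metric.closedBall p (Real.sqrt d)) ≤ stdGaussian d (T ⁻¹' S) :=
          measure_mono hsubset
      _ ≤ (Measure.map T (stdGaussian d)) S := Measure.le_map_apply haem S
      _ = μ S := by rw [hmap]
  have hconcS : μ S ≤ ENNReal.ofReal (Real.exp (-α * r)) := by
    have h := hconc (fun z => ‖z‖) lipschitzWith_one_norm r hr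
    rw [← hm] at h
    exact h
  have hreal : (2 * π) ^ (-(d:ℝ) / 2) * Real.exp (-(‖p‖ + Real.sqrt d) ^ 2 / 2) * 2 ^ d ≤
      Real.exp (-α * r) := by
    have h1 := (gauss_ball_lb p).trans (hchain.trans hconcS)
    exact (ENNReal.ofReal_le_ofReal_iff (Real.exp_nonneg _)).1 h1
  -- turn into exponent inequality
  have hplog : ((2:ℝ) * π) ^ (-(d:ℝ) / 2) = Real.exp (Real.log (2 * π) * (-(d:ℝ) / 2)) :=
    Real.rpow_def_of_pos (by positivity) _
  have h2d : (2:ℝ) ^ d = Real.exp (d * Real.log 2) := by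
    rw [← Real.log_pow, Real.exp_log (pow_pos two_pos d)]
  have hexp_le : Real.log (2 * π) * (-(d:ℝ) / 2) + (-(‖p‖ + Real.sqrt d) ^ 2 / 2)
      + d * Real.log 2 ≤ -α * r := by
    apply Real.exp_le_exp.1
    rw [Real.exp_add, Real.exp_add, ← hplog, ← h2d]
    exact hreal
  have hlog2pi : Real.log (2 * π) ≤ 2 := by
    rw [Real.log_le_iff_le_exp (by positivity)]
    have hpi := Real.pi_lt_d2
    have he := Real.exp_one_gt_d9
    have h2 : Real.exp 2 = Real.exp 1 * Real.exp 1 := by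
      rw [← Real.exp_add]; norm_num
    nlinarith
  have hlog2 : 0 ≤ Real.log 2 := Real.log_nonneg (by norm_num)
  have hp_norm : ‖p‖ ≤ ‖x‖ + 2 * Real.sqrt d := by
    rw [hp_def]
    calc ‖x + (2 * Real.sqrt d) • θ‖ ≤ ‖x‖ + ‖(2 * Real.sqrt d) • θ‖ := norm_add_le _ _
      _ = ‖x‖ + 2 * Real.sqrt d := by
          rw [norm_smul, Real.norm_eq_abs, abs_of_pos (by positivity), hθ, mul_one]
  have hs2 : (‖p‖ + Real.sqrt d) ^ 2 ≤ 2 * ‖x‖ ^ 2 + 18 * d := by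
    have h1 : (‖p‖ + Real.sqrt d) ≤ ‖x‖ + 3 * Real.sqrt d := by linarith
    have h0 : 0 ≤ ‖p‖ + Real.sqrt d := by positivity
    have h2 : (‖p‖ + Real.sqrt d) ^ 2 ≤ (‖x‖ + 3 * Real.sqrt d) ^ 2 :=
      pow_le_pow_left₀ h0 h1 2
    nlinarith [sq_nonneg (‖x‖ - 3 * Real.sqrt d)]
  have har : α * r ≤ ‖x‖ ^ 2 + 10 * d := by
    have e1 : (d:ℝ) * Real.log (2 * π) ≤ (d:ℝ) * 2 :=
      mul_le_mul_of_nonneg_left hlog2pi (le_of_lt hd0')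
    have e2 : 0 ≤ (d:ℝ) * Real.log 2 := mul_nonneg (le_of_lt hd0') hlog2
    clear_value T R m r θ p S
    linarith [hexp_le, hs2, e1, e2]
  have hrle : r ≤ (‖x‖ ^ 2 + 10 * d) / α := by
    rw [le_div_iff₀ hα]; nlinarith
  have : R = 3 * (m + r) := by rw [hr_def]; ring
  rw [this]
  have : m + r ≤ 2 * d / α + (‖x‖ ^ 2 + 10 * d) / α := add_le_add hmle hrle
  calc 3 * (m + r) ≤ 3 * (2 * d / α + (‖x‖ ^ 2 + 10 * d) / α) := by linarith
    _ = 3 / α * (‖x‖ ^ 2 + 12 * d) := by field_simp; ring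
end
end

section
/- Suppose d ≥ 1 and let μ be a centered probability measure on ℝ^d with ∫ |z| dμ(z) ≤ √d. Let x, a ∈ ℝ^d satisfy |a| ≥ 8(1 + |x|²) and |a| ≥ 6√d, and set u = (a - x)/|a - x|. Then ∫ ( ⟨z - a, u⟩ + |z - a|/2 ) dμ(z) ≤ - |a| / 8. -/
open MeasureTheory
open scoped RealInnerProductSpace ENNReal

/-- If `d ≥ 1`, `μ` is a centered probability measure on `ℝ^d` with first moment
`∫ |z| dμ ≤ √d`, and `x, a` satisfy `|a| ≥ 8(1 + |x|²)` and `|a| ≥ 6√d`, then with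
`u = (a - x)/|a - x|` one has `∫ (⟨z - a, u⟩ + |z - a|/2) dμ(z) ≤ -|a|/8`. -/
theorem statement_9 {d : ℕ} (hd : 1 ≤ d) (μ : Measure (EuclideanSpace ℝ (Fin d)))
    [IsProbabilityMeasure μ] (hcent : ∫ z, z ∂μ = 0)
    (hmom : ∫⁻ z, ENNReal.ofReal ‖z‖ ∂μ ≤ ENNReal.ofReal (Real.sqrt d))
    (x a : EuclideanSpace ℝ (Fin d))
    (ha1 : 8 * (1 + ‖x‖ ^ 2) ≤ ‖a‖) (ha2 : 6 * Real.sqrt d ≤ ‖a‖) :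
    ∫ z, (⟪z - a, ‖a - x‖⁻¹ • (a - x)⟫ + ‖z - a‖ / 2) ∂μ ≤ -(‖a‖ / 8) := by
  set A := ‖a‖ with hAdef
  have hA8 : (8:ℝ) ≤ A := le_trans (by nlinarith [sq_nonneg ‖x‖]) ha1
  have hX : ‖x‖ ≤ A / 8 := by nlinarith [sq_nonneg (‖x‖ - 1)]
  -- integrability of the identity
  have hid : Integrable (fun z : EuclideanSpace ℝ (Fin d) => z) μ := by
    refine ⟨aestronglyMeasurable_id, ?_⟩
    have : ∫⁻ z, ‖z‖₊ ∂μ ≤ ENNReal.ofReal (Real.sqrt d) := by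
      calc ∫⁻ z, (‖z‖₊ : ℝ≥0∞) ∂μ = ∫⁻ z, ENNReal.ofReal ‖z‖ ∂μ := by
            exact lintegral_congr fun z => (ofReal_norm z).symm
        _ ≤ ENNReal.ofReal (Real.sqrt d) := hmom
    exact lt_of_le_of_lt this ENNReal.ofReal_lt_top
  have hsub : Integrable (fun z : EuclideanSpace ℝ (Fin d) => z - a) μ :=
    hid.sub (integrable_const a)
  -- first moment bound
  have hM : ∫ z, ‖z‖ ∂μ ≤ Real.sqrt d := by
    have h1 : ∫ z, ‖z‖ ∂μ = (∫⁻ z, ENNReal.ofReal ‖z‖ ∂μ).toReal := by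
      rw [integral_eq_lintegral_of_nonneg_ae (Filter.Eventually.of_forall fun z => norm_nonneg z)
        hid.aestronglyMeasurable.norm]
    rw [h1]
    calc (∫⁻ z, ENNReal.ofReal ‖z‖ ∂μ).toReal
        ≤ (ENNReal.ofReal (Real.sqrt d)).toReal :=
          ENNReal.toReal_mono ENNReal.ofReal_ne_top hmom
      _ = Real.sqrt d := ENNReal.toReal_ofReal (Real.sqrt_nonneg _)
    done
  have hMA : ∫ z, ‖z‖ ∂μ ≤ A / 6 := by linarith
  -- geometry of a - x
  have hax_lb : 7 * A / 8 ≤ ‖a - x‖ := by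
    have := norm_sub_norm_le a x
    linarith
  have hax_pos : (0:ℝ) < ‖a - x‖ := by linarith
  have hax_ub : ‖a - x‖ ≤ 9 * A / 8 := by
    have := norm_sub_le a x
    linarith
  have hinner : 7 * A ^ 2 / 8 ≤ ⟪a - x, a⟫ := by
    have h1 : ⟪a - x, a⟫ = ⟪a, a⟫ - ⟪x, a⟫ := by rw [inner_sub_left]
    have h2 : ⟪a, a⟫ = A ^ 2 := by
      rw [real_inner_self_eq_norm_sq]
    have h3 : ⟪x, a⟫ ≤ ‖x‖ * A := real_inner_le_norm x a
    nlinarith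
  have hkey : 7 * A / 9 ≤ ‖a - x‖⁻¹ * ⟪a - x, a⟫ := by
    rw [inv_mul_eq_div, le_div_iff₀ hax_pos]
    nlinarith
  -- compute the inner-product integral
  have hint_inner : Integrable (fun z : EuclideanSpace ℝ (Fin d) =>
      ⟪z - a, ‖a - x‖⁻¹ • (a - x)⟫) μ := by
    have := hsub.inner_const (𝕜 := ℝ) (‖a - x‖⁻¹ • (a - x))
    exact this
  have hint_norm : Integrable (fun z : EuclideanSpace ℝ (Fin d) => ‖z - a‖ / 2) μ :=
    hsub.norm.div_const 2
  have hintsub : ∫ z, (z - a) ∂μ = -a := by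
    rw [integral_sub hid (integrable_const a), hcent, integral_const]
    simp
  have hIinner : ∫ z, ⟪z - a, ‖a - x‖⁻¹ • (a - x)⟫ ∂μ = -(‖a - x‖⁻¹ * ⟪a - x, a⟫) := by
    have h1 : ∀ z : EuclideanSpace ℝ (Fin d),
        ⟪z - a, ‖a - x‖⁻¹ • (a - x)⟫ = ⟪‖a - x‖⁻¹ • (a - x), z - a⟫ := fun z =>
      real_inner_comm _ _
    simp_rw [h1]
    rw [integral_inner hsub, hintsub]
    rw [real_inner_smul_left, inner_neg_right, real_inner_comm]
    ring
  have hInorm : ∫ z, ‖z - a‖ / 2 ∂μ ≤ (∫ z, ‖z‖ ∂μ + A) / 2 := by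
    rw [integral_div]
    have : ∫ z, ‖z - a‖ ∂μ ≤ ∫ z, (‖z‖ + A) ∂μ := by
      refine integral_mono hsub.norm (hid.norm.add (integrable_const A)) fun z => ?_
      exact norm_sub_le z a
    rw [integral_add hid.norm (integrable_const A), integral_const] at this
    simp only [probReal_univ, measure_univ, ENNReal.toReal_one, one_smul, smul_eq_mul, one_mul] at this
    linarith
  rw [integral_add hint_inner hint_norm, hIinner]
  have := hMA
  linarith
end

section
/- Let γ be the standard Gaussian measure on ℝ^d with d ≥ 1. Then for every a ∈ ℝ^d, γ( B(a, 2√d) ) ≥ (3/4) e^{-|a|²/2}, where B(a, r) denotes the closed Euclidean ball of center a and radius r. -/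
open MeasureTheory Real
open scoped ENNReal

noncomputable section

open Metric

-- pointwise key inequality
lemma key_ineq {d : ℕ} (a y : EuclideanSpace ℝ (Fin d)) :
    2 * (Real.exp (-‖a‖ ^ 2 / 2) * Real.exp (-‖y‖ ^ 2 / 2)) ≤
      Real.exp (-‖y + a‖ ^ 2 / 2) + Real.exp (-‖-y + a‖ ^ 2 / 2) := by
  have h1 : ‖y + a‖ ^ 2 = ‖y‖ ^ 2 + 2 * inner ℝ y a + ‖a‖ ^ 2 := norm_add_sq_real y a
  have h2 : ‖-y + a‖ ^ 2 = ‖a‖ ^ 2 - 2 * inner ℝ y a + ‖y‖ ^ 2 := by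
    rw [neg_add_eq_sub, norm_sub_sq_real, real_inner_comm]
  set s : ℝ := inner ℝ y a with hs
  set m : ℝ := -(‖y‖ ^ 2 + ‖a‖ ^ 2) / 2 with hm
  have e1 : Real.exp (-‖y + a‖ ^ 2 / 2) = Real.exp m * Real.exp (-s) := by
    rw [← Real.exp_add, h1, hm]; ring_nf
  have e2 : Real.exp (-‖-y + a‖ ^ 2 / 2) = Real.exp m * Real.exp s := by
    rw [← Real.exp_add, h2, hm]; ring_nf
  have e3 : Real.exp (-‖a‖ ^ 2 / 2) * Real.exp (-‖y‖ ^ 2 / 2) = Real.exp m := by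
    rw [← Real.exp_add, hm]; ring_nf
  have hexp1 : s + 1 ≤ Real.exp s := Real.add_one_le_exp s
  have hexp2 : -s + 1 ≤ Real.exp (-s) := Real.add_one_le_exp (-s)
  have hm2 : (0:ℝ) < Real.exp m := Real.exp_pos m
  rw [e1, e2, e3]
  nlinarith


abbrev Ed (d : ℕ) := EuclideanSpace ℝ (Fin d)

variable {d : ℕ}

lemma integrable_gauss (b : ℝ) (hb : 0 < b) :
    Integrable (fun x : Ed d => Real.exp (-b * ‖x‖ ^ 2)) := by
  have h := (GaussianFourier.integrable_cexp_neg_mul_sq_norm_add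
    (V := Ed d) (b := (b : ℂ)) (by simpa using hb) 0 (0 : Ed d)).norm
  refine h.congr (Filter.Eventually.of_forall fun x => ?_)
  simp [Complex.norm_exp, ← Complex.ofReal_pow]

lemma integral_gauss_norm :
    ∫ x : Ed d, Real.exp (-(1/2) * ‖x‖ ^ 2) = (2 * π) ^ ((d : ℝ) / 2) := by
  rw [GaussianFourier.integral_rexp_neg_mul_sq_norm (by norm_num : (0:ℝ) < 1/2)]
  rw [finrank_euclideanSpace_fin, show π / (1/2 : ℝ) = 2 * π by ring]

lemma stdGaussian_univ : stdGaussian d Set.univ = 1 := by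
  have hint : Integrable (fun x : Ed d => (2 * π) ^ (-(d : ℝ) / 2) * Real.exp (-‖x‖ ^ 2 / 2)) := by
    have := (integrable_gauss (d := d) (1/2) (by norm_num)).const_mul ((2 * π) ^ (-(d : ℝ) / 2))
    refine this.congr (Filter.Eventually.of_forall fun x => ?_)
    ring_nf
  rw [stdGaussian, withDensity_apply _ MeasurableSet.univ, Measure.restrict_univ,
    ← ofReal_integral_eq_lintegral_ofReal hint
      (Filter.Eventually.of_forall fun x => by positivity)]
  rw [integral_const_mul]
  have : ∫ x : Ed d, Real.exp (-‖x‖ ^ 2 / 2) = (2 * π) ^ ((d : ℝ) / 2) := by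
    rw [← integral_gauss_norm]
    congr 1 with x
    ring_nf
  rw [this, ← Real.rpow_add (by positivity), show -(d:ℝ)/2 + (d:ℝ)/2 = 0 by ring, Real.rpow_zero]
  exact ENNReal.ofReal_one

lemma dens_meas :
    Measurable (fun x : Ed d => ENNReal.ofReal ((2 * π) ^ (-(d : ℝ) / 2) * Real.exp (-‖x‖ ^ 2 / 2))) := by
  have hc1 : Continuous fun x : Ed d => -‖x‖ ^ 2 / 2 := (continuous_norm.pow 2).neg.div_const 2
  exact ((continuous_const.mul (Real.continuous_exp.comp hc1)).measurable).ennreal_ofReal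

lemma radial_identity (hd : 1 ≤ d) :
    ∫ y in Set.Ioi (0:ℝ), y ^ (d - 1) * (y ^ 2 * Real.exp (-y ^ 2 / 2)) =
      d * ∫ y in Set.Ioi (0:ℝ), y ^ (d - 1) * Real.exp (-y ^ 2 / 2) := by
  have hcast : ((d - 1 : ℕ) : ℝ) = (d : ℝ) - 1 := by
    rw [Nat.cast_sub hd, Nat.cast_one]
  have hd1 : (1:ℝ) ≤ (d:ℝ) := by exact_mod_cast hd
  have hA : ∫ y in Set.Ioi (0:ℝ), y ^ (d - 1) * (y ^ 2 * Real.exp (-y ^ 2 / 2)) =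
      ∫ y in Set.Ioi (0:ℝ), y ^ ((d : ℝ) + 1) * Real.exp (-(1/2) * y ^ (2:ℝ)) := by
    refine setIntegral_congr_fun measurableSet_Ioi fun y hy => ?_
    have hy0 : (0:ℝ) < y := hy
    rw [← Real.rpow_natCast y (d-1), ← Real.rpow_natCast y 2, hcast, Nat.cast_ofNat,
      show -(1/2) * y ^ (2:ℝ) = -y ^ (2:ℝ) / 2 by ring,
      show ((d:ℝ) + 1) = ((d:ℝ) - 1) + (2:ℝ) by ring, Real.rpow_add hy0]
    ring
  have hB : ∫ y in Set.Ioi (0:ℝ), y ^ (d - 1) * Real.exp (-y ^ 2 / 2) =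
      ∫ y in Set.Ioi (0:ℝ), y ^ ((d : ℝ) - 1) * Real.exp (-(1/2) * y ^ (2:ℝ)) := by
    refine setIntegral_congr_fun measurableSet_Ioi fun y hy => ?_
    have hy0 : (0:ℝ) < y := hy
    rw [← Real.rpow_natCast y (d-1), ← Real.rpow_natCast y 2, hcast, Nat.cast_ofNat,
      show -(1/2) * y ^ (2:ℝ) = -y ^ (2:ℝ) / 2 by ring]
  rw [hA, hB,
    integral_rpow_mul_exp_neg_mul_rpow (by norm_num) (by linarith) (by norm_num : (0:ℝ) < 1/2),
    integral_rpow_mul_exp_neg_mul_rpow (by norm_num) (by linarith) (by norm_num : (0:ℝ) < 1/2)]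
  have h1 : ((d:ℝ) + 1 + 1) / 2 = (d:ℝ)/2 + 1 := by ring
  have h2 : ((d:ℝ) - 1 + 1) / 2 = (d:ℝ)/2 := by ring
  have hdo : (d:ℝ)/2 ≠ 0 := by positivity
  rw [h1, h2, Real.Gamma_add_one hdo]
  have h3 : -((d:ℝ) + 1 + 1) / 2 = -((d:ℝ) - 1 + 1)/2 + (-1) := by ring
  rw [h3, Real.rpow_add (by norm_num : (0:ℝ) < 1/2), Real.rpow_neg_one]
  ring

lemma second_moment (hd : 1 ≤ d) :
    ∫⁻ x, ENNReal.ofReal (‖x‖ ^ 2) ∂(stdGaussian d) = ENNReal.ofReal d := by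
  haveI : Nonempty (Fin d) := ⟨⟨0, hd⟩⟩
  haveI : Nontrivial (Ed d) := inferInstance
  set C : ℝ := (2 * π) ^ (-(d : ℝ) / 2) with hCdef
  have hC0 : 0 < C := by rw [hCdef]; positivity
  have hsqmeas : Measurable fun x : Ed d => ENNReal.ofReal (‖x‖ ^ 2) :=
    ((continuous_norm.pow 2).measurable).ennreal_ofReal
  rw [stdGaussian, lintegral_withDensity_eq_lintegral_mul volume dens_meas hsqmeas]
  have hc1 : Continuous fun x : Ed d => -‖x‖ ^ 2 / 2 := (continuous_norm.pow 2).neg.div_const 2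
  have hcont : Continuous fun x : Ed d => C * Real.exp (-‖x‖ ^ 2 / 2) * ‖x‖ ^ 2 :=
    (continuous_const.mul (Real.continuous_exp.comp hc1)).mul (continuous_norm.pow 2)
  have hbound : ∀ x : Ed d, ‖C * Real.exp (-‖x‖ ^ 2 / 2) * ‖x‖ ^ 2‖ ≤
      4 * C * Real.exp (-(1/4) * ‖x‖ ^ 2) := by
    intro x
    set t : ℝ := ‖x‖ ^ 2 with ht
    have ht0 : 0 ≤ t := by positivity
    have h1 : t / 4 + 1 ≤ Real.exp (t/4) := Real.add_one_le_exp _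
    have h2 : Real.exp (-t/2) * Real.exp (t/4) = Real.exp (-(1/4) * t) := by
      rw [← Real.exp_add]; ring_nf
    rw [Real.norm_eq_abs, abs_of_nonneg (by positivity)]
    have h4 : t ≤ 4 * Real.exp (t/4) := by nlinarith [Real.exp_pos (t/4)]
    calc C * Real.exp (-t/2) * t ≤ C * Real.exp (-t/2) * (4 * Real.exp (t/4)) := by
          apply mul_le_mul_of_nonneg_left h4 (by positivity)
      _ = 4 * C * Real.exp (-(1/4) * t) := by rw [← h2]; ring
  have hint : Integrable (fun x : Ed d => C * Real.exp (-‖x‖ ^ 2 / 2) * ‖x‖ ^ 2) := by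
    refine Integrable.mono' (((integrable_gauss (d := d) (1/4) (by norm_num)).const_mul
      (4 * C))) hcont.aestronglyMeasurable ?_
    exact Filter.Eventually.of_forall hbound
  have hstep : ∫⁻ x : Ed d, (fun x : Ed d => ENNReal.ofReal (C * Real.exp (-‖x‖ ^ 2 / 2))) x *
      (fun x : Ed d => ENNReal.ofReal (‖x‖ ^ 2)) x ∂volume
      = ENNReal.ofReal (∫ x : Ed d, C * Real.exp (-‖x‖ ^ 2 / 2) * ‖x‖ ^ 2) := by
    rw [ofReal_integral_eq_lintegral_ofReal hint
      (Filter.Eventually.of_forall fun x => by positivity)]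
    refine lintegral_congr fun x => ?_
    show ENNReal.ofReal (C * Real.exp (-‖x‖ ^ 2 / 2)) * ENNReal.ofReal (‖x‖ ^ 2) = _
    rw [← ENNReal.ofReal_mul (by positivity)]
  simp only [Pi.mul_apply] at hstep ⊢
  rw [hstep]
  -- now compute the integral
  have hM : ∫ x : Ed d, ‖x‖ ^ 2 * Real.exp (-‖x‖ ^ 2 / 2) =
      (d : ℝ) * ∫ x : Ed d, Real.exp (-‖x‖ ^ 2 / 2) := by
    have hA := MeasureTheory.integral_fun_norm_addHaar (volume : Measure (Ed d))
      (fun y : ℝ => y ^ 2 * Real.exp (-y ^ 2 / 2))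
    have hB := MeasureTheory.integral_fun_norm_addHaar (volume : Measure (Ed d))
      (fun y : ℝ => Real.exp (-y ^ 2 / 2))
    rw [finrank_euclideanSpace_fin] at hA hB
    simp only [smul_eq_mul, nsmul_eq_mul] at hA hB
    rw [hA, hB, radial_identity hd]
    ring
  have hNval : ∫ x : Ed d, Real.exp (-‖x‖ ^ 2 / 2) = (2 * π) ^ ((d : ℝ) / 2) := by
    rw [← integral_gauss_norm]
    congr 1 with x
    ring_nf
  have : ∫ x : Ed d, C * Real.exp (-‖x‖ ^ 2 / 2) * ‖x‖ ^ 2 =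
      C * ((d:ℝ) * (2 * π) ^ ((d : ℝ) / 2)) := by
    rw [← hNval, ← hM, ← integral_const_mul]
    congr 1 with x
    ring
  rw [this, hCdef, ← mul_assoc, mul_comm ((2 * π) ^ (-(d : ℝ) / 2)) _, mul_assoc,
    ← Real.rpow_add (by positivity), show -(d:ℝ)/2 + (d:ℝ)/2 = 0 by ring, Real.rpow_zero, mul_one]


lemma shift_lemma (a : Ed d) (r : ℝ) :
    ENNReal.ofReal (Real.exp (-‖a‖ ^ 2 / 2)) * stdGaussian d (closedBall 0 r) ≤
      stdGaussian d (closedBall a r) := by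
  set C : ℝ := (2 * π) ^ (-(d : ℝ) / 2) with hC
  have hC0 : 0 ≤ C := by rw [hC]; positivity
  set F : Ed d → ℝ≥0∞ := fun x => ENNReal.ofReal (C * Real.exp (-‖x‖ ^ 2 / 2)) with hF
  have hFmeas : Measurable F := dens_meas
  have hga : stdGaussian d (closedBall a r) = ∫⁻ y, (closedBall (0:Ed d) r).indicator (fun y => F (y + a)) y := by
    rw [stdGaussian, withDensity_apply _ measurableSet_closedBall,
      ← lintegral_indicator measurableSet_closedBall _,
      ← lintegral_add_right_eq_self (fun x => (closedBall a r).indicator F x) a]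
    refine lintegral_congr fun y => ?_
    by_cases h : y ∈ closedBall (0:Ed d) r
    · have h' : y + a ∈ closedBall a r := by
        simpa [dist_eq_norm] using (by simpa [dist_eq_norm] using h : ‖y‖ ≤ r)
      simp [Set.indicator_of_mem h', Set.indicator_of_mem h]
    · have h' : y + a ∉ closedBall a r := by
        simp only [mem_closedBall, dist_eq_norm, add_sub_cancel_right] at *
        simpa [dist_eq_norm] using h
      simp [Set.indicator_of_notMem h', Set.indicator_of_notMem h]
  have hFa : Measurable fun y : Ed d => F (y + a) := hFmeas.comp (measurable_add_const a)
  have hmeas2 : Measurable fun y : Ed d => (closedBall (0:Ed d) r).indicator (fun y => F (y + a)) y :=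
    hFa.indicator measurableSet_closedBall
  have hga' : stdGaussian d (closedBall a r) = ∫⁻ y, (closedBall (0:Ed d) r).indicator (fun y => F (-y + a)) y := by
    rw [hga]
    conv_lhs => rw [← Measure.map_neg_eq_self (volume : Measure (Ed d))]
    rw [lintegral_map hmeas2 measurable_neg]
    refine lintegral_congr fun y => ?_
    by_cases h : y ∈ closedBall (0:Ed d) r
    · have h' : -y ∈ closedBall (0:Ed d) r := by simpa [dist_eq_norm] using h
      simp [Set.indicator_of_mem h', Set.indicator_of_mem h]
    · have h' : -y ∉ closedBall (0:Ed d) r := by simpa [mem_closedBall, dist_eq_norm] using h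
      simp [Set.indicator_of_notMem h', Set.indicator_of_notMem h]
  have key : 2 * (ENNReal.ofReal (Real.exp (-‖a‖ ^ 2 / 2)) * stdGaussian d (closedBall 0 r)) ≤
      2 * stdGaussian d (closedBall a r) := by
    have hrhs : 2 * stdGaussian d (closedBall a r) =
        ∫⁻ y, ((closedBall (0:Ed d) r).indicator (fun y => F (y + a)) y
          + (closedBall (0:Ed d) r).indicator (fun y => F (-y + a)) y) := by
      rw [lintegral_add_left hmeas2]
      rw [← hga, ← hga', two_mul]
    have hlhs : 2 * (ENNReal.ofReal (Real.exp (-‖a‖ ^ 2 / 2)) * stdGaussian d (closedBall 0 r)) =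
        ∫⁻ y, (closedBall (0:Ed d) r).indicator
          (fun y => 2 * ENNReal.ofReal (Real.exp (-‖a‖ ^ 2 / 2)) * F y) y := by
      rw [lintegral_indicator measurableSet_closedBall _]
      rw [lintegral_const_mul _ hFmeas]
      rw [stdGaussian, withDensity_apply _ measurableSet_closedBall]
      ring
    rw [hlhs, hrhs]
    refine lintegral_mono fun y => ?_
    by_cases h : y ∈ closedBall (0:Ed d) r
    · simp only [Set.indicator_of_mem h]
      have hkey := key_ineq a y
      calc 2 * ENNReal.ofReal (Real.exp (-‖a‖ ^ 2 / 2)) * F y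
          = ENNReal.ofReal (2 * (Real.exp (-‖a‖ ^ 2 / 2) * (C * Real.exp (-‖y‖ ^ 2 / 2)))) := by
            simp only [hF]
            rw [ENNReal.ofReal_mul (p := 2) (by norm_num),
              ENNReal.ofReal_mul (p := Real.exp (-‖a‖ ^ 2 / 2)) (by positivity),
              ENNReal.ofReal_ofNat, mul_assoc]
        _ ≤ ENNReal.ofReal (C * Real.exp (-‖y + a‖ ^ 2 / 2) + C * Real.exp (-‖-y + a‖ ^ 2 / 2)) := by
            apply ENNReal.ofReal_le_ofReal
            nlinarith [key_ineq a y, Real.exp_pos (-‖y + a‖ ^ 2 / 2), Real.exp_pos (-‖-y + a‖ ^ 2 / 2)]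
        _ = F (y + a) + F (-y + a) := by
            rw [hF, ENNReal.ofReal_add (by positivity) (by positivity)]
    · simp [Set.indicator_of_notMem h]
  have h2 : (2:ℝ≥0∞) ≠ 0 := by norm_num
  have h2' : (2:ℝ≥0∞) ≠ ⊤ := by norm_num
  exact (ENNReal.mul_le_mul_iff_right h2 h2').mp key

/-- For `d ≥ 1` and any `a ∈ ℝ^d`, the standard Gaussian measure of the closed ball of
center `a` and radius `2√d` is at least `(3/4) e^{-|a|²/2}`. -/
theorem statement_10 {d : ℕ} (hd : 1 ≤ d) (a : EuclideanSpace ℝ (Fin d)) :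
    ENNReal.ofReal (3 / 4 * Real.exp (-‖a‖ ^ 2 / 2)) ≤
      stdGaussian d (Metric.closedBall a (2 * Real.sqrt d)) := by
  have hdpos : (0:ℝ) < d := by exact_mod_cast hd
  set r : ℝ := 2 * Real.sqrt d with hr
  set S : Set (Ed d) := {x : Ed d | ENNReal.ofReal (4*(d:ℝ)) ≤ ENNReal.ofReal (‖x‖^2)} with hS
  have hmarkov := mul_meas_ge_le_lintegral₀ (μ := stdGaussian d)
    (((continuous_norm.pow 2).measurable).ennreal_ofReal.aemeasurable
      (f := fun x : Ed d => ENNReal.ofReal (‖x‖ ^ 2))) (ENNReal.ofReal (4*(d:ℝ)))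
  rw [second_moment hd] at hmarkov
  have hsub : (closedBall (0:Ed d) r)ᶜ ⊆ S := by
    intro x hx
    simp only [Set.mem_compl_iff, mem_closedBall, dist_zero_right, not_le] at hx
    have hsq : (0:ℝ) ≤ (d:ℝ) := hdpos.le
    have h1 : 4 * (d:ℝ) ≤ ‖x‖^2 := by
      nlinarith [Real.sq_sqrt hsq, Real.sqrt_nonneg (d:ℝ), hx]
    exact ENNReal.ofReal_le_ofReal h1
  have htail : stdGaussian d (closedBall (0:Ed d) r)ᶜ ≤ ENNReal.ofReal (1/4) := by
    have key : ENNReal.ofReal (4*(d:ℝ)) * stdGaussian d ((closedBall (0:Ed d) r)ᶜ) ≤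
        ENNReal.ofReal (4*(d:ℝ)) * ENNReal.ofReal (1/4) := by
      rw [← ENNReal.ofReal_mul (by positivity), show (4*(d:ℝ))*(1/4) = (d:ℝ) by ring]
      exact le_trans (mul_le_mul_right (measure_mono hsub) _) hmarkov
    exact (ENNReal.mul_le_mul_iff_right (ENNReal.ofReal_pos.mpr (by positivity)).ne'
      ENNReal.ofReal_ne_top).mp key
  have hb0 : ENNReal.ofReal (3/4) ≤ stdGaussian d (closedBall (0:Ed d) r) := by
    have hadd := measure_add_measure_compl (μ := stdGaussian d)
      (measurableSet_closedBall (x := (0:Ed d)) (ε := r))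
    rw [stdGaussian_univ] at hadd
    have h1 : (1:ℝ≥0∞) ≤ stdGaussian d (closedBall (0:Ed d) r) + ENNReal.ofReal (1/4) := by
      rw [← hadd]; exact add_le_add_right htail _
    have h34 : ENNReal.ofReal (3/4) + ENNReal.ofReal (1/4) = 1 := by
      rw [← ENNReal.ofReal_add (by norm_num) (by norm_num)]; norm_num
    have h2 : ENNReal.ofReal (3/4) + ENNReal.ofReal (1/4) ≤
        stdGaussian d (closedBall (0:Ed d) r) + ENNReal.ofReal (1/4) := h34 ▸ h1
    exact (ENNReal.add_le_add_iff_right ENNReal.ofReal_ne_top).mp h2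
  calc ENNReal.ofReal (3 / 4 * Real.exp (-‖a‖ ^ 2 / 2))
      = ENNReal.ofReal (Real.exp (-‖a‖ ^ 2 / 2)) * ENNReal.ofReal (3/4) := by
        rw [← ENNReal.ofReal_mul (Real.exp_nonneg _)]
        congr 1
        ring
    _ ≤ ENNReal.ofReal (Real.exp (-‖a‖ ^ 2 / 2)) * stdGaussian d (closedBall (0:Ed d) r) :=
        mul_le_mul_right hb0 _
    _ ≤ stdGaussian d (Metric.closedBall a r) := shift_lemma a r
end
end
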